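/- For every Fσ ideal I on ℕ there is a closed set K ⊆ 2^ℕ such that I = I_K, where I_K is the ideal generated by K: x ∈ I_K if and only if x ⊆ y₁ ∪ … ∪ y_n for some finitely many y₁,…,y_n ∈ K. -/

import Mathlib

open Set

/-- The Cantor space `2^ℕ`: subsets of `ℕ` identified with their characteristic functions. -/
abbrev Cantor : Type := ℕ → Bool

/-- The subset of `ℕ` coded by a point of Cantor space. -/
def toSet (x : Cantor) : Set ℕ := {n | x n = true}

/-- `s ⊑ z` : the finite set `s` is an initial segment of `z ⊆ ℕ`,
i.e. `s = z ∩ {0,1,…,n}` for some `n`. -/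
def InitSeg (s : Finset ℕ) (z : Set ℕ) : Prop := ∃ n : ℕ, (s : Set ℕ) = z ∩ Set.Iic n

/-- `s ⊑ t` for finite sets `s, t`. -/
def InitSegF (s t : Finset ℕ) : Prop := ∃ n : ℕ, s = t ∩ Finset.Iic n

/-- `B` is a front on the set `x ⊆ ℕ`: all members of `B` are subsets of `x`, any two
members of `B` are `⊑`-incomparable, and every infinite subset of `x` has an initial
segment in `B`. -/
def IsFrontOn (B : Set (Finset ℕ)) (x : Set ℕ) : Prop :=
  (∀ s ∈ B, (s : Set ℕ) ⊆ x) ∧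
  (∀ s ∈ B, ∀ t ∈ B, InitSegF s t → s = t) ∧
  (∀ y : Set ℕ, y ⊆ x → y.Infinite → ∃ s ∈ B, InitSeg s y)

/-- `y` is `F`-homogeneous: either every infinite subset of `y` has an initial segment
in `F`, or no finite subset of `y` belongs to `F`. -/
def Homog (F : Set (Finset ℕ)) (y : Set ℕ) : Prop :=
  (∀ z : Set ℕ, z ⊆ y → z.Infinite → ∃ s ∈ F, InitSeg s z) ∨
  (∀ s : Finset ℕ, (s : Set ℕ) ⊆ y → s ∉ F)

/-- `I` is an ideal on `ℕ`: a family of subsets of `ℕ` closed under taking subsets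
and under finite unions. -/
def IsIdeal (I : Set Cantor) : Prop :=
  (∀ x ∈ I, ∀ y : Cantor, toSet y ⊆ toSet x → y ∈ I) ∧
  (∀ x ∈ I, ∀ y ∈ I, (fun n => x n || y n) ∈ I)

/-- `I` is an `Fσ` subset of the Cantor space. -/
def IsFsigma (I : Set Cantor) : Prop :=
  ∃ C : ℕ → Set Cantor, (∀ n, IsClosed (C n)) ∧ I = ⋃ n, C n

/-- A family `C` is tall if every infinite subset of `ℕ` contains an infinite member of `C`. -/
def Tall (C : Set Cantor) : Prop :=
  ∀ x : Cantor, (toSet x).Infinite → ∃ y ∈ C, (toSet y).Infinite ∧ toSet y ⊆ toSet x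

/-- `S` is a Borel selector for the family `C`. -/
def IsSelector (C : Set Cantor) (S : Cantor → Cantor) : Prop :=
  Measurable S ∧ ∀ x : Cantor,
    toSet (S x) ⊆ toSet x ∧ ((toSet x).Infinite → (toSet (S x)).Infinite) ∧ S x ∈ C

/-- A Borel ideal `I` is uniformly selective. -/
def UnifSelective (I : Set Cantor) : Prop :=
  ∃ F : (ℕ → Cantor) → Cantor, Measurable F ∧
    ∀ xs : ℕ → Cantor, (∀ n, xs n ∉ I) → (∀ n, toSet (xs (n + 1)) ⊆ toSet (xs n)) →
      F xs ∉ I ∧ ∀ n ∈ toSet (F xs), toSet (F xs) \ Set.Iic n ⊆ toSet (xs n)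

/-- A Borel ideal `I` is uniformly `p⁺`. -/
def UnifPplus (I : Set Cantor) : Prop :=
  ∃ G : (ℕ → Cantor) → Cantor, Measurable G ∧
    ∀ xs : ℕ → Cantor, (∀ n, xs n ∉ I) → (∀ n, toSet (xs (n + 1)) ⊆ toSet (xs n)) →
      G xs ∉ I ∧ ∀ n, (toSet (G xs) \ toSet (xs n)).Finite

/-- `(t n)_{n∈ℕ}` is a partition of `x` into finite sets. -/
def FinPartition (x : Cantor) (t : ℕ → Cantor) : Prop :=
  (∀ n, (toSet (t n)).Finite) ∧
  (∀ m n, m ≠ n → Disjoint (toSet (t m)) (toSet (t n))) ∧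
  (⋃ n, toSet (t n)) = toSet x

/-- A Borel ideal `I` is uniformly `q⁺`. -/
def UnifQplus (I : Set Cantor) : Prop :=
  ∃ F : Cantor × (ℕ → Cantor) → Cantor, Measurable F ∧
    ∀ (x : Cantor) (t : ℕ → Cantor), x ∉ I → FinPartition x t →
      toSet (F (x, t)) ⊆ toSet x ∧ F (x, t) ∉ I ∧
      ∀ n, (toSet (F (x, t)) ∩ toSet (t n)).Subsingleton

/-- The ideal `I` is `q⁺`. -/
def Qplus (I : Set Cantor) : Prop :=
  ∀ (x : Cantor) (t : ℕ → Cantor), x ∉ I → FinPartition x t →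
    ∃ y : Cantor, toSet y ⊆ toSet x ∧ y ∉ I ∧
      ∀ n, (toSet y ∩ toSet (t n)).Subsingleton

/-- The ideal `I` is selective. -/
def Selective (I : Set Cantor) : Prop :=
  ∀ xs : ℕ → Cantor, (∀ n, xs n ∉ I) → (∀ n, toSet (xs (n + 1)) ⊆ toSet (xs n)) →
    ∃ x : Cantor, x ∉ I ∧ ∀ n ∈ toSet x, toSet x \ Set.Iic n ⊆ toSet (xs n)

/-- The ideal generated by `K`: `x ∈ IdealGen K` iff `x ⊆ y₁ ∪ … ∪ y_n` for some
`y₁, …, y_n ∈ K`. -/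
def IdealGen (K : Set Cantor) : Set Cantor :=
  {x | ∃ l : List Cantor, l ≠ [] ∧ (∀ y ∈ l, y ∈ K) ∧ toSet x ⊆ ⋃ y ∈ l, toSet y}

/-- `↓K = {x : x ⊆ y for some y ∈ K}`. -/
def Down (K : Set Cantor) : Set Cantor := {x | ∃ y ∈ K, toSet x ⊆ toSet y}

/-- `C` is hereditary: closed under taking subsets. -/
def Hereditary (C : Set Cantor) : Prop :=
  ∀ x ∈ C, ∀ y : Cantor, toSet y ⊆ toSet x → y ∈ C

/-- `A ⊆ 2^ℕ` is `Σ¹₂`: the projection of a coanalytic subset of `2^ℕ × ℕ^ℕ`. -/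
def Sigma12 (A : Set Cantor) : Prop :=
  ∃ C : Set (Cantor × (ℕ → ℕ)), MeasureTheory.AnalyticSet Cᶜ ∧
    A = {x | ∃ w : ℕ → ℕ, (x, w) ∈ C}

/-- `A ⊆ 2^ℕ` is `Π¹₂`: the complement of a `Σ¹₂` set. -/
def Pi12 (A : Set Cantor) : Prop := Sigma12 Aᶜ


/-- The empty subset of `ℕ` as a point of Cantor space. -/
def emptyPt : Cantor := fun _ => false

/-- The singleton `{k}` as a point of Cantor space. -/
def ePt (k : ℕ) : Cantor := fun j => decide (j = k)

/-- The tail `x ∩ (n, ∞)` as a point of Cantor space. -/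
def tailF (n : ℕ) (x : Cantor) : Cantor := fun j => x j && decide (n < j)

lemma toSet_emptyPt : toSet emptyPt = ∅ := by
  ext n; simp [toSet, emptyPt]

lemma mem_toSet {x : Cantor} {n : ℕ} : n ∈ toSet x ↔ x n = true := Iff.rfl

lemma band_true {a b : Bool} (h : (a && b) = true) : a = true ∧ b = true := by
  simp only [Bool.and_eq_true] at h; exact h

lemma mem_toSet_tailF {n : ℕ} {x : Cantor} {j : ℕ} :
    j ∈ toSet (tailF n x) ↔ x j = true ∧ n < j := by
  simp [toSet, tailF]

lemma continuous_tailF (n : ℕ) : Continuous (tailF n) := by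
  refine continuous_pi fun j => ?_
  exact Continuous.comp (continuous_of_discreteTopology
    (f := fun b : Bool => b && decide (n < j))) (continuous_apply j)

lemma isClosed_down {C : Set Cantor} (hC : IsClosed C) : IsClosed (Down C) := by
  have h : Down C =
      (fun p : Cantor × Cantor => fun n => p.1 n && p.2 n) '' (Set.univ ×ˢ C) := by
    ext x
    constructor
    · rintro ⟨y, hy, hxy⟩
      refine ⟨(x, y), ⟨trivial, hy⟩, ?_⟩
      funext n
      show (x n && y n) = x n
      cases hx : x n with
      | false => simp
      | true =>
        have hyn : y n = true := hxy (show n ∈ toSet x from hx)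
        simp [hyn]
    · rintro ⟨⟨a, y⟩, ⟨-, hy⟩, rfl⟩
      refine ⟨y, hy, fun n hn => ?_⟩
      have h2 : (a n && y n) = true := hn
      exact (band_true h2).2
  rw [h]
  refine (IsCompact.image ?_ ?_).isClosed
  · exact isCompact_univ.prod hC.isCompact
  · refine continuous_pi fun n => ?_
    have h1 : Continuous fun p : Cantor × Cantor => (p.1 n, p.2 n) :=
      ((continuous_apply n).comp continuous_fst).prodMk
        ((continuous_apply n).comp continuous_snd)
    exact Continuous.comp (continuous_of_discreteTopology
      (f := fun b : Bool × Bool => b.1 && b.2)) h1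

lemma isClosed_impl (k : ℕ) {P : Cantor → Prop} (hP : IsClosed {x | P x}) :
    IsClosed {x : Cantor | x k = true → P x} := by
  have h : {x : Cantor | x k = true → P x}
      = {x : Cantor | x k = false} ∪ {x | P x} := by
    ext x
    simp only [Set.mem_setOf_eq, Set.mem_union]
    cases h : x k <;> simp [h]
  rw [h]
  have h2 : IsClosed {x : Cantor | x k = false} := by
    have : {x : Cantor | x k = false} = (fun x : Cantor => x k) ⁻¹' {false} := rfl
    rw [this]
    exact (isClosed_singleton).preimage (continuous_apply k)
  exact h2.union hP

/-- Every `Fσ` ideal on `ℕ` is generated by a closed subset of the Cantor space. -/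
theorem fsigma_ideal_generated_by_closed (I : Set Cantor) (hI : IsIdeal I)
    (hFs : IsFsigma I) :
    ∃ K : Set Cantor, IsClosed K ∧ I = IdealGen K := by
  obtain ⟨C, hCcl, hCeq⟩ := hFs
  by_cases hne : I.Nonempty
  swap
  · refine ⟨∅, isClosed_empty, ?_⟩
    rw [Set.not_nonempty_iff_eq_empty] at hne
    rw [hne]
    ext x
    simp only [Set.mem_empty_iff_false, false_iff]
    rintro ⟨l, hl, hlK, -⟩
    cases l with
    | nil => exact hl rfl
    | cons y t => exact hlK y List.mem_cons_self
  obtain ⟨z₀, hz₀⟩ := hne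
  have hEmpty : emptyPt ∈ I := by
    refine hI.1 z₀ hz₀ emptyPt ?_
    rw [toSet_emptyPt]; exact Set.empty_subset _
  have hCI : ∀ n, C n ⊆ I := by
    intro n x hx
    rw [hCeq]
    exact Set.mem_iUnion.2 ⟨n, hx⟩
  -- the approximating closed hereditary sets
  set Kn : ℕ → Set Cantor :=
    fun n => Down ((⋃ i ∈ Finset.range (n + 1), C i) ∪ {emptyPt}) with hKndef
  have hKncl : ∀ n, IsClosed (Kn n) := by
    intro n
    refine isClosed_down (IsClosed.union ?_ isClosed_singleton)
    exact Set.Finite.isClosed_biUnion (Finset.finite_toSet _) (fun i _ => hCcl i)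
  have hKnI : ∀ n, Kn n ⊆ I := by
    intro n z hz
    obtain ⟨y, hy, hzy⟩ := hz
    rcases hy with hy | hy
    · simp only [Set.mem_iUnion] at hy
      obtain ⟨i, -, hyi⟩ := hy
      exact hI.1 y (hCI i hyi) z hzy
    · rw [Set.mem_singleton_iff] at hy
      subst hy
      exact hI.1 emptyPt hEmpty z hzy
  have hEmptyKn : ∀ n, emptyPt ∈ Kn n :=
    fun n => ⟨emptyPt, Or.inr rfl, subset_rfl⟩
  -- the generating closed set
  set K : Set Cantor :=
    {x | (∀ k, x k = true → ePt k ∈ I) ∧ ∀ n, x n = true → tailF n x ∈ Kn n} with hKdef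
  have hKcl : IsClosed K := by
    have h : K = (⋂ k, {x : Cantor | x k = true → ePt k ∈ I}) ∩
        ⋂ n, {x : Cantor | x n = true → tailF n x ∈ Kn n} := by
      ext x
      simp only [hKdef, Set.mem_setOf_eq, Set.mem_inter_iff, Set.mem_iInter]
    rw [h]
    refine IsClosed.inter (isClosed_iInter fun k => ?_) (isClosed_iInter fun n => ?_)
    · refine isClosed_impl k ?_
      by_cases h : ePt k ∈ I
      · simp only [h, Set.setOf_true]; exact isClosed_univ
      · simp only [h, Set.setOf_false]; exact isClosed_empty
    · refine isClosed_impl n ?_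
      exact (hKncl n).preimage (continuous_tailF n)
  have hKI : K ⊆ I := by
    intro x hx
    by_cases hxe : ∃ n, x n = true
    · set m := Nat.find hxe with hm
      have hxm : x m = true := Nat.find_spec hxe
      have hem : ePt m ∈ I := hx.1 m hxm
      have htl : tailF m x ∈ I := hKnI m (hx.2 m hxm)
      have hu : (fun j => ePt m j || tailF m x j) ∈ I := hI.2 _ hem _ htl
      refine hI.1 _ hu x ?_
      intro j hj
      have hxj : x j = true := hj
      have hmj : m ≤ j := by
        by_contra hc
        push_neg at hc
        exact (Nat.find_min hxe hc) hxj
      show (ePt m j || tailF m x j) = true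
      rcases Nat.eq_or_lt_of_le hmj with h | h
      · simp [ePt, ← h]
      · simp [tailF, hxj, h]
    · push_neg at hxe
      refine hI.1 z₀ hz₀ x ?_
      intro j hj
      have : x j = true := hj
      simp [hxe j] at this
  have hunion : ∀ l : List Cantor, (∀ y ∈ l, y ∈ I) →
      ∃ u ∈ I, (⋃ y ∈ l, toSet y) ⊆ toSet u := by
    intro l
    induction l with
    | nil => intro _; exact ⟨emptyPt, hEmpty, by simp⟩
    | cons y t ih =>
      intro h
      obtain ⟨u, hu, hsu⟩ := ih (fun z hz => h z (List.mem_cons_of_mem _ hz))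
      refine ⟨fun n => y n || u n, hI.2 y (h y List.mem_cons_self) u hu, ?_⟩
      intro j hj
      simp only [Set.mem_iUnion, List.mem_cons] at hj
      obtain ⟨z, hz, hjz⟩ := hj
      show (y j || u j) = true
      rcases hz with rfl | hz
      · simp [show z j = true from hjz]
      · have : u j = true := hsu (Set.mem_iUnion.2 ⟨z, Set.mem_iUnion.2 ⟨hz, hjz⟩⟩)
        simp [this]
  refine ⟨K, hKcl, ?_⟩
  ext x
  constructor
  · -- x ∈ I → x ∈ IdealGen K
    intro hx
    have hx' : x ∈ ⋃ n, C n := hCeq ▸ hx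
    obtain ⟨m, hxm⟩ := Set.mem_iUnion.1 hx'
    have hsing : ∀ k, x k = true → ePt k ∈ I := by
      intro k hk
      refine hI.1 x hx (ePt k) ?_
      intro j hj
      have : decide (j = k) = true := hj
      have hjk : j = k := of_decide_eq_true this
      subst hjk
      exact hk
    have hyK : tailF m x ∈ K := by
      constructor
      · intro k hk
        have : x k = true := (band_true (show (x k && decide (m < k)) = true from hk)).1
        exact hsing k this
      · intro n hn
        obtain ⟨hxn, hmn'⟩ := band_true (show (x n && decide (m < n)) = true from hn)
        have hmn : m < n := of_decide_eq_true hmn'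
        refine ⟨x, Or.inl ?_, ?_⟩
        · exact Set.mem_iUnion.2 ⟨m, Set.mem_iUnion.2 ⟨Finset.mem_range.2 (by omega), hxm⟩⟩
        · intro j hj
          obtain ⟨hj1, -⟩ := mem_toSet_tailF.1 hj
          exact (band_true hj1).1
    have hsingK : ∀ k, x k = true → ePt k ∈ K := by
      intro k hk
      constructor
      · intro j hj
        have hjk : j = k := of_decide_eq_true hj
        subst hjk
        exact hsing j hk
      · intro n hn
        have hnk : n = k := of_decide_eq_true hn
        subst hnk
        have he : tailF n (ePt n) = emptyPt := by
          funext j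
          by_cases h : j = n <;> simp [tailF, ePt, emptyPt, h]
        rw [he]
        exact hEmptyKn n
    refine ⟨tailF m x ::
      (((Finset.range (m + 1)).filter (fun k => x k = true)).toList.map ePt), by simp, ?_, ?_⟩
    · intro z hz
      rcases List.mem_cons.1 hz with rfl | hz
      · exact hyK
      · obtain ⟨k, hk, rfl⟩ := List.mem_map.1 hz
        rw [Finset.mem_toList, Finset.mem_filter] at hk
        exact hsingK k hk.2
    · intro j hj
      have hxj : x j = true := hj
      by_cases hmj : m < j
      · refine Set.mem_biUnion List.mem_cons_self ?_
        show (x j && decide (m < j)) = true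
        simp [hxj, hmj]
      · refine Set.mem_biUnion (List.mem_cons_of_mem _ (List.mem_map.2
          ⟨j, Finset.mem_toList.2 (Finset.mem_filter.2
            ⟨Finset.mem_range.2 (by omega), hxj⟩), rfl⟩)) ?_
        show decide (j = j) = true
        simp
  · -- x ∈ IdealGen K → x ∈ I
    rintro ⟨l, -, hlK, hsub⟩
    obtain ⟨u, hu, hsu⟩ := hunion l (fun y hy => hKI (hlK y hy))
    exact hI.1 u hu x (hsub.trans hsu)
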